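/- Let $(M,g)$ be a closed Riemannian manifold and $u$ a smooth solution of $\partial_t u = \mathcal{L}_\phi u$ on $M \times [a,b]$ with $I(t) = \int_M |u|^2 e^{-\phi} > 0$ for all $t$. Define the frequency $U(t) = D(t)/I(t)$ with $D(t) = -\int_M |\nabla u|^2 e^{-\phi}$. Then $U$ is nondecreasing: $U'(t) \geq 0$. -/

import Mathlib

/- STATEMENT 3.  Abstract closed-manifold setting (μ = e^{-φ} dV_g, gradu = ∇u,
Lu = 𝓛_φ u, gradLu = ∇𝓛_φ u).  With I(t) = ∫ |u|² e^{-φ} > 0 and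
D(t) = -∫ |∇u|² e^{-φ}, the frequency U = D/I is nondecreasing: U' ≥ 0. -/
open MeasureTheory
open scoped RealInnerProductSpace

/-- Cauchy–Schwarz for integrals of real functions. -/
lemma integral_cauchy_schwarz {M : Type*} [MeasurableSpace M] (μ : Measure M)
    {f g : M → ℝ} (hf : Integrable (fun x => f x ^ 2) μ)
    (hg : Integrable (fun x => g x ^ 2) μ)
    (hfg : Integrable (fun x => f x * g x) μ) :
    (∫ x, f x * g x ∂μ) ^ 2 ≤ (∫ x, f x ^ 2 ∂μ) * (∫ x, g x ^ 2 ∂μ) := by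
  set P := ∫ x, f x ^ 2 ∂μ with hP
  set Q := ∫ x, f x * g x ∂μ with hQ
  set R := ∫ x, g x ^ 2 ∂μ with hR
  have hRnn : 0 ≤ R := integral_nonneg fun x => sq_nonneg _
  rcases eq_or_lt_of_le hRnn with hR0 | hRpos
  · -- R = 0 : then g = 0 a.e. so Q = 0
    have hg0 : (fun x => g x ^ 2) =ᵐ[μ] 0 := by
      refine (integral_eq_zero_iff_of_nonneg (fun x => sq_nonneg _) hg).mp hR0.symm
    have hgz : g =ᵐ[μ] 0 := hg0.mono fun x hx => by
      have : g x ^ 2 = 0 := hx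
      simpa using pow_eq_zero_iff two_ne_zero |>.mp this
    have hQ0 : Q = 0 := by
      rw [hQ, integral_congr_ae (hgz.mono fun x hx => by
        simp only [Pi.zero_apply] at hx ⊢; rw [hx, mul_zero])]
      simp
    rw [hQ0, ← hR0]
    simp
  · have key : 0 ≤ ∫ x, (R * f x - Q * g x) ^ 2 ∂μ :=
      integral_nonneg fun x => sq_nonneg _
    have expand : ∫ x, (R * f x - Q * g x) ^ 2 ∂μ
        = R ^ 2 * P - 2 * R * Q * Q + Q ^ 2 * R := by
      have h1 : (fun x => (R * f x - Q * g x) ^ 2)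
          = fun x => R ^ 2 * f x ^ 2 - 2 * R * Q * (f x * g x) + Q ^ 2 * g x ^ 2 := by
        funext x; ring
      rw [h1, integral_add
        (show Integrable (fun x => R ^ 2 * f x ^ 2 - 2 * R * Q * (f x * g x)) μ from
          (hf.const_mul _).sub (hfg.const_mul _)) (hg.const_mul _),
        integral_sub (hf.const_mul _) (hfg.const_mul _),
        integral_const_mul, integral_const_mul, integral_const_mul]
    rw [expand] at key
    have : 0 ≤ R * (R * P - Q ^ 2) := by nlinarith
    nlinarith

theorem frequency_monotone
    {M : Type*} [MeasurableSpace M] (μ : Measure M) [IsFiniteMeasure μ]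
    {V : Type*} [NormedAddCommGroup V] [InnerProductSpace ℝ V]
    (a b : ℝ) (hab : a ≤ b)
    (u Lu : ℝ → M → ℝ) (gradu gradLu : ℝ → M → V)
    (hu2 : ∀ t, Integrable (fun x => (u t x) ^ 2) μ)
    (hgrad2 : ∀ t, Integrable (fun x => ‖gradu t x‖ ^ 2) μ)
    (hLu2 : ∀ t, Integrable (fun x => (Lu t x) ^ 2) μ)
    (huLu : ∀ t, Integrable (fun x => u t x * Lu t x) μ)
    (hgg : ∀ t, Integrable (fun x => ⟪gradu t x, gradLu t x⟫) μ)
    -- the drift heat equation ∂ₜ u = 𝓛_φ u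
    (hheat : ∀ x t, HasDerivAt (fun s => u s x) (Lu t x) t)
    -- self-adjointness of 𝓛_φ (integration by parts on the closed manifold)
    (hibp : ∀ t, ∫ x, u t x * Lu t x ∂μ = -∫ x, ‖gradu t x‖ ^ 2 ∂μ)
    (hibp2 : ∀ t, ∫ x, ⟪gradu t x, gradLu t x⟫ ∂μ = -∫ x, (Lu t x) ^ 2 ∂μ)
    -- differentiation under the integral sign for I and D
    (hDI : ∀ t ∈ Set.Icc a b,
      HasDerivAt (fun s => ∫ x, (u s x) ^ 2 ∂μ)
        (∫ x, 2 * (u t x * Lu t x) ∂μ) t)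
    (hDD : ∀ t ∈ Set.Icc a b,
      HasDerivAt (fun s => -∫ x, ‖gradu s x‖ ^ 2 ∂μ)
        (-∫ x, 2 * ⟪gradu t x, gradLu t x⟫ ∂μ) t)
    -- positivity of I on [a,b]
    (hIpos : ∀ t ∈ Set.Icc a b, 0 < ∫ x, (u t x) ^ 2 ∂μ) :
    ∀ t ∈ Set.Icc a b,
      0 ≤ deriv (fun s =>
        (-∫ x, ‖gradu s x‖ ^ 2 ∂μ) / (∫ x, (u s x) ^ 2 ∂μ)) t := by
  intro t ht
  have hI := hIpos t ht
  have hdiv := (hDD t ht).div (hDI t ht) (ne_of_gt hI)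
  rw [show (fun s => (-∫ x, ‖gradu s x‖ ^ 2 ∂μ) / (∫ x, (u s x) ^ 2 ∂μ)) = ((fun s => -∫ x, ‖gradu s x‖ ^ 2 ∂μ) / fun s => ∫ x, (u s x) ^ 2 ∂μ) from rfl, hdiv.deriv]
  set P := ∫ x, (u t x) ^ 2 ∂μ
  set Q := ∫ x, u t x * Lu t x ∂μ with hQdef
  set R := ∫ x, (Lu t x) ^ 2 ∂μ
  have h1 : ∫ x, 2 * (u t x * Lu t x) ∂μ = 2 * Q := integral_const_mul 2 _
  have h2 : -∫ x, 2 * ⟪gradu t x, gradLu t x⟫ ∂μ = 2 * R := by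
    rw [integral_const_mul, hibp2 t]; ring
  have hD : -∫ x, ‖gradu t x‖ ^ 2 ∂μ = Q := (hibp t).symm
  have hcs : Q ^ 2 ≤ P * R := by
    have := integral_cauchy_schwarz μ (hu2 t) (hLu2 t) (huLu t)
    linarith
  rw [h1, h2, hD]
  apply div_nonneg
  · nlinarith
  · positivity
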